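/- Suppose the set {x ∈ ℝ^n : |Φx| = b} is nonempty and let s := min{‖x‖₀ : |Φx| = b} with s ≥ 1. Let r₀ > 0 be such that every minimizer of ‖x‖₀ over {x : |Φx| = b} satisfies ‖x‖_∞ ≤ r₀ and, for the given p ∈ (0,1), every minimizer of ‖x‖_p^p over {x : |Φx| = b} satisfies ‖x‖_∞ ≤ r₀. Let r_m > 0 satisfy r_m ≤ r₀ and: for every ε ∈ {−1,1}^m, every extreme point (x̃, ỹ) of T_ε, and every index k, if ỹ_k ≠ 0 then ỹ_k ≥ r_m. Then every minimizer x_p of ‖x‖_p^p over {x : |Φx| = b} satisfies ‖x_p‖₀ ≤ (r₀/r_m)^p · s. -/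

import Mathlib

open Matrix

/-- The set of sign vectors `{−1,1}^m`. -/
def signs (m : ℕ) : Set (Fin m → ℝ) := {ε | ∀ j, ε j = 1 ∨ ε j = -1}

/-- `T_ε = {(x,y) | Φx = b∘ε, |x| ≤ y, ‖x‖_∞ ≤ r₀, 0 ≤ y ≤ r₀·1}`. -/
def Teps {m n : ℕ} (Φ : Matrix (Fin m) (Fin n) ℝ) (b : Fin m → ℝ) (r₀ : ℝ)
    (ε : Fin m → ℝ) : Set ((Fin n → ℝ) × (Fin n → ℝ)) :=
  {q | Φ.mulVec q.1 = (fun j => b j * ε j) ∧ (∀ i, |q.1 i| ≤ q.2 i) ∧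
    ‖q.1‖ ≤ r₀ ∧ ∀ i, 0 ≤ q.2 i ∧ q.2 i ≤ r₀}

/-- `T = ⋃_{ε ∈ {−1,1}^m} T_ε`. -/
def TT {m n : ℕ} (Φ : Matrix (Fin m) (Fin n) ℝ) (b : Fin m → ℝ) (r₀ : ℝ) :
    Set ((Fin n → ℝ) × (Fin n → ℝ)) :=
  ⋃ ε ∈ signs m, Teps Φ b r₀ ε

/-- `‖x‖₀`: the number of nonzero components of `x`. -/
noncomputable def norm0 {n : ℕ} (x : Fin n → ℝ) : ℕ :=
  (Finset.univ.filter (fun i => x i ≠ 0)).card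

private lemma sum_le_eq_forall {n : ℕ} {f g : Fin n → ℝ}
    (hle : ∀ i, f i ≤ g i) (heq : ∑ i, g i ≤ ∑ i, f i) : ∀ i, f i = g i := by
  by_contra h
  push_neg at h
  obtain ⟨i, hi⟩ := h
  have : ∑ i, f i < ∑ i, g i :=
    Finset.sum_lt_sum (fun j _ => hle j) ⟨i, Finset.mem_univ i, lt_of_le_of_ne (hle i) hi⟩
  linarith

private lemma rpow_concave_eq {p a c x y : ℝ} (hp : 0 < p) (hp1 : p < 1)
    (ha : 0 < a) (hc : 0 < c) (hac : a + c = 1) (hx : 0 ≤ x) (hy : 0 ≤ y)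
    (h : (a * x + c * y) ^ p ≤ a * x ^ p + c * y ^ p) : x = y := by
  by_contra hxy
  have := (Real.strictConcaveOn_rpow hp hp1).2 (Set.mem_Ici.mpr hx) (Set.mem_Ici.mpr hy)
    hxy ha hc hac
  simp only [smul_eq_mul] at this
  linarith

private lemma rpow_inj' {p x y : ℝ} (hp : 0 < p) (hx : 0 ≤ x) (hy : 0 ≤ y)
    (h : x ^ p = y ^ p) : x = y := by
  rcases lt_trichotomy x y with h' | h' | h'
  · exact absurd h (ne_of_lt (Real.rpow_lt_rpow hx h' hp))
  · exact h'
  · exact absurd h.symm (ne_of_lt (Real.rpow_lt_rpow hy h' hp))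

private lemma seg_abs_eq {a c u v x : ℝ} (ha : 0 < a) (hc : 0 < c) (hac : a + c = 1)
    (hu : |u| = |x|) (hv : |v| = |x|) (hx : a * u + c * v = x) : u = x ∧ v = x := by
  have huv : u = v := by
    rcases abs_eq_abs.mp (hu.trans hv.symm) with h | h
    · exact h
    · -- u = -v
      have hxeq : x = (c - a) * v := by rw [← hx, h]; ring
      have habs : |v| = |c - a| * |v| := by
        rw [← abs_mul, ← hxeq, hv]
      have hca : |c - a| < 1 := by
        rw [abs_sub_lt_iff]; constructor <;> linarith
      have hv0 : v = 0 := by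
        by_contra hv0
        have hvp : 0 < |v| := abs_pos.mpr hv0
        nlinarith
      rw [h, hv0]; ring
  have hvx : v = x := by
    rw [huv] at hx
    linear_combination hx - v * hac
  exact ⟨huv.trans hvx, hvx⟩

theorem stmt_18 {m n : ℕ} (hmn : m ≤ n) (Φ : Matrix (Fin m) (Fin n) ℝ)
    (hrank : Φ.rank = m) (b : Fin m → ℝ) (hb : ∀ j, 0 ≤ b j)
    (p : ℝ) (hp : 0 < p) (hp1 : p < 1)
    (s : ℕ) (hs1 : 1 ≤ s)
    (hs : IsLeast {k : ℕ | ∃ x : Fin n → ℝ, (∀ j, |Φ.mulVec x j| = b j) ∧ norm0 x = k} s)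
    (r₀ : ℝ) (hr₀ : 0 < r₀)
    (hbound0 : ∀ x : Fin n → ℝ, (∀ j, |Φ.mulVec x j| = b j) →
      (∀ y : Fin n → ℝ, (∀ j, |Φ.mulVec y j| = b j) → norm0 x ≤ norm0 y) → ‖x‖ ≤ r₀)
    (hboundp : ∀ x : Fin n → ℝ, (∀ j, |Φ.mulVec x j| = b j) →
      (∀ y : Fin n → ℝ, (∀ j, |Φ.mulVec y j| = b j) →
        ∑ i, |x i| ^ p ≤ ∑ i, |y i| ^ p) → ‖x‖ ≤ r₀)
    (rm : ℝ) (hrm : 0 < rm) (hrmr₀ : rm ≤ r₀)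
    (hext : ∀ ε ∈ signs m, ∀ q ∈ Set.extremePoints ℝ (Teps Φ b r₀ ε),
      ∀ k : Fin n, q.2 k ≠ 0 → rm ≤ q.2 k) :
    ∀ xp : Fin n → ℝ, (∀ j, |Φ.mulVec xp j| = b j) →
      (∀ y : Fin n → ℝ, (∀ j, |Φ.mulVec y j| = b j) →
        ∑ i, |xp i| ^ p ≤ ∑ i, |y i| ^ p) →
      (norm0 xp : ℝ) ≤ (r₀ / rm) ^ p * s := by
  classical
  intro xp hfeas hmin
  obtain ⟨x0, hx0feas, hx0card⟩ := hs.1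
  have hx0min : ∀ y, (∀ j, |Φ.mulVec y j| = b j) → norm0 x0 ≤ norm0 y := by
    intro y hy
    rw [hx0card]
    exact hs.2 ⟨y, hy, rfl⟩
  have hnormcoord : ∀ (x : Fin n → ℝ), ‖x‖ ≤ r₀ → ∀ i, |x i| ≤ r₀ := by
    intro x hx i
    calc |x i| = ‖x i‖ := (Real.norm_eq_abs _).symm
      _ ≤ ‖x‖ := norm_le_pi_norm x i
      _ ≤ r₀ := hx
  have hx0norm : ‖x0‖ ≤ r₀ := hbound0 x0 hx0feas hx0min
  have hxpnorm : ‖xp‖ ≤ r₀ := hboundp xp hfeas hmin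
  set ε : Fin m → ℝ := fun j => if 0 ≤ Φ.mulVec xp j then 1 else -1 with hε
  have hεs : ε ∈ signs m := by
    intro j
    by_cases h : 0 ≤ Φ.mulVec xp j <;> simp [hε, h]
  have feas_of : ∀ u : Fin n → ℝ, Φ.mulVec u = (fun j => b j * ε j) →
      ∀ j, |Φ.mulVec u j| = b j := by
    intro u hu j
    rw [congrFun hu j]
    by_cases h : 0 ≤ Φ.mulVec xp j <;>
      simp [hε, h, abs_mul, abs_of_nonneg (hb j)]
  have hmem : (xp, fun i => |xp i|) ∈ Teps Φ b r₀ ε := by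
    refine ⟨?_, fun i => le_refl _, hxpnorm,
      fun i => ⟨abs_nonneg _, hnormcoord xp hxpnorm i⟩⟩
    funext j
    by_cases h : 0 ≤ Φ.mulVec xp j
    · simp only [hε, h, if_pos, mul_one]
      rw [← hfeas j, abs_of_nonneg h]
    · simp only [hε, h, if_neg, not_false_iff, mul_neg_one]
      rw [← hfeas j, abs_of_neg (lt_of_not_ge h)]
      ring
  -- extreme point
  have hextpt : (xp, fun i => |xp i|) ∈ Set.extremePoints ℝ (Teps Φ b r₀ ε) := by
    refine ⟨hmem, ?_⟩
    rintro u hu v hv ⟨a, c, ha, hc, hac, heq⟩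
    obtain ⟨hu1, hu2, hu3, hu4⟩ := hu
    obtain ⟨hv1, hv2, hv3, hv4⟩ := hv
    have heq1 : ∀ i, a * u.1 i + c * v.1 i = xp i := by
      intro i
      have := congrArg (fun q : (Fin n → ℝ) × (Fin n → ℝ) => q.1 i) heq
      simpa using this
    have heq2 : ∀ i, a * u.2 i + c * v.2 i = |xp i| := by
      intro i
      have := congrArg (fun q : (Fin n → ℝ) × (Fin n → ℝ) => q.2 i) heq
      simpa using this
    have hu2nn : ∀ i, 0 ≤ u.2 i := fun i => (hu4 i).1
    have hv2nn : ∀ i, 0 ≤ v.2 i := fun i => (hv4 i).1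
    have hSu : ∑ i, |xp i| ^ p ≤ ∑ i, |u.1 i| ^ p := hmin u.1 (feas_of u.1 hu1)
    have hSv : ∑ i, |xp i| ^ p ≤ ∑ i, |v.1 i| ^ p := hmin v.1 (feas_of v.1 hv1)
    have hu1le : ∑ i, |u.1 i| ^ p ≤ ∑ i, (u.2 i) ^ p :=
      Finset.sum_le_sum fun i _ => Real.rpow_le_rpow (abs_nonneg _) (hu2 i) hp.le
    have hv1le : ∑ i, |v.1 i| ^ p ≤ ∑ i, (v.2 i) ^ p :=
      Finset.sum_le_sum fun i _ => Real.rpow_le_rpow (abs_nonneg _) (hv2 i) hp.le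
    have key1 : ∀ i, a * (u.2 i) ^ p + c * (v.2 i) ^ p ≤ (a * u.2 i + c * v.2 i) ^ p := by
      intro i
      have := (Real.concaveOn_rpow hp.le hp1.le).2 (Set.mem_Ici.mpr (hu2nn i))
        (Set.mem_Ici.mpr (hv2nn i)) ha.le hc.le hac
      simpa using this
    have hlow : ∑ i, |xp i| ^ p ≤ ∑ i, (a * (u.2 i) ^ p + c * (v.2 i) ^ p) := by
      have hsplit : ∑ i, (a * (u.2 i) ^ p + c * (v.2 i) ^ p)
          = a * ∑ i, (u.2 i) ^ p + c * ∑ i, (v.2 i) ^ p := by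
        rw [Finset.sum_add_distrib, Finset.mul_sum, Finset.mul_sum]
      rw [hsplit]
      have hA := mul_le_mul_of_nonneg_left (hSu.trans hu1le) ha.le
      have hC := mul_le_mul_of_nonneg_left (hSv.trans hv1le) hc.le
      have hid : a * ∑ i, |xp i| ^ p + c * ∑ i, |xp i| ^ p = ∑ i, |xp i| ^ p := by
        linear_combination (∑ i, |xp i| ^ p) * hac
      linarith
    have hpt : ∀ i, a * (u.2 i) ^ p + c * (v.2 i) ^ p = (a * u.2 i + c * v.2 i) ^ p := by
      apply sum_le_eq_forall key1
      calc ∑ i, (a * u.2 i + c * v.2 i) ^ p = ∑ i, |xp i| ^ p :=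
            Finset.sum_congr rfl fun i _ => by rw [heq2 i]
        _ ≤ _ := hlow
    have hu2v2 : ∀ i, u.2 i = v.2 i := fun i =>
      rpow_concave_eq hp hp1 ha hc hac (hu2nn i) (hv2nn i) (le_of_eq (hpt i).symm)
    have hu2xp : ∀ i, u.2 i = |xp i| := by
      intro i
      have h1 := heq2 i
      rw [← hu2v2 i] at h1
      linear_combination h1 - u.2 i * hac
    have hv2xp : ∀ i, v.2 i = |xp i| := fun i => (hu2v2 i).symm.trans (hu2xp i)
    have hu2sum : ∑ i, (u.2 i) ^ p = ∑ i, |xp i| ^ p :=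
      Finset.sum_congr rfl fun i _ => by rw [hu2xp i]
    have hv2sum : ∑ i, (v.2 i) ^ p = ∑ i, |xp i| ^ p :=
      Finset.sum_congr rfl fun i _ => by rw [hv2xp i]
    have hu1eq : ∀ i, |u.1 i| ^ p = (u.2 i) ^ p := by
      apply sum_le_eq_forall
        (fun i => Real.rpow_le_rpow (abs_nonneg _) (hu2 i) hp.le)
      rw [hu2sum]; exact hSu
    have hv1eq : ∀ i, |v.1 i| ^ p = (v.2 i) ^ p := by
      apply sum_le_eq_forall
        (fun i => Real.rpow_le_rpow (abs_nonneg _) (hv2 i) hp.le)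
      rw [hv2sum]; exact hSv
    have hu1abs : ∀ i, |u.1 i| = |xp i| := by
      intro i
      rw [← hu2xp i]
      exact rpow_inj' hp (abs_nonneg _) (hu2nn i) (hu1eq i)
    have hv1abs : ∀ i, |v.1 i| = |xp i| := by
      intro i
      rw [← hv2xp i]
      exact rpow_inj' hp (abs_nonneg _) (hv2nn i) (hv1eq i)
    have hfinal : ∀ i, u.1 i = xp i ∧ v.1 i = xp i := fun i =>
      seg_abs_eq ha hc hac (hu1abs i) (hv1abs i) (heq1 i)
    exact Prod.ext (funext fun i => (hfinal i).1) (funext fun i => hu2xp i)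
  have hlb : ∀ k, xp k ≠ 0 → rm ≤ |xp k| := by
    intro k hk
    have := hext ε hεs _ hextpt k (by simpa using abs_ne_zero.mpr hk)
    simpa using this
  -- final chain
  have h1 : rm ^ p * (norm0 xp : ℝ) ≤ ∑ i, |xp i| ^ p := by
    rw [norm0, mul_comm]
    calc ((Finset.univ.filter fun i => xp i ≠ 0).card : ℝ) * rm ^ p
        = ∑ _i ∈ Finset.univ.filter (fun i => xp i ≠ 0), rm ^ p := by
          rw [Finset.sum_const, nsmul_eq_mul]
      _ ≤ ∑ i ∈ Finset.univ.filter (fun i => xp i ≠ 0), |xp i| ^ p :=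
          Finset.sum_le_sum fun i hi =>
            Real.rpow_le_rpow hrm.le (hlb i (Finset.mem_filter.mp hi).2) hp.le
      _ ≤ ∑ i, |xp i| ^ p :=
          Finset.sum_le_sum_of_subset_of_nonneg (Finset.filter_subset _ _)
            (fun i _ _ => Real.rpow_nonneg (abs_nonneg _) p)
  have h2 : ∑ i, |xp i| ^ p ≤ ∑ i, |x0 i| ^ p := hmin x0 hx0feas
  have h3 : ∑ i, |x0 i| ^ p ≤ r₀ ^ p * s := by
    have hzero : ∀ i ∈ Finset.univ, |x0 i| ^ p ≠ 0 → x0 i ≠ 0 := by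
      intro i _ h hx
      apply h
      rw [hx, abs_zero, Real.zero_rpow hp.ne']
    calc ∑ i, |x0 i| ^ p
        = ∑ i ∈ Finset.univ.filter (fun i => x0 i ≠ 0), |x0 i| ^ p :=
          (Finset.sum_filter_of_ne hzero).symm
      _ ≤ ∑ _i ∈ Finset.univ.filter (fun i => x0 i ≠ 0), r₀ ^ p :=
          Finset.sum_le_sum fun i _ =>
            Real.rpow_le_rpow (abs_nonneg _) (hnormcoord x0 hx0norm i) hp.le
      _ = (norm0 x0 : ℝ) * r₀ ^ p := by
          rw [Finset.sum_const, nsmul_eq_mul, norm0]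
      _ = r₀ ^ p * s := by rw [hx0card]; ring
  have hrmp : (0:ℝ) < rm ^ p := Real.rpow_pos_of_pos hrm p
  rw [Real.div_rpow hr₀.le hrm.le, div_mul_eq_mul_div, le_div_iff₀ hrmp]
  nlinarith [h1, h2, h3]
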